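/- Let A = diag(d₁, …, dₙ) with d₁ ≥ d₂ ≥ … ≥ dₙ ≥ 0, and let M be an n×n real matrix with max_i ∑_{j=1}^n |M_{ij}| ≤ 1 (each row sum of absolute values is at most 1). For t ≥ 0 set A_t = A(I + tM). Then d₁(1 + 2t) ≥ ρ(A_t) ≥ d₁(1 − 2nt), where ρ denotes the spectral radius. -/

import Mathlib

open MeasureTheory Matrix Metric

/-- Borel measurable structure on real square matrices. -/
noncomputable instance matrixMeasurableSpace {n : ℕ} :
    MeasurableSpace (Matrix (Fin n) (Fin n) ℝ) := borel _

instance matrixBorelSpace {n : ℕ} : BorelSpace (Matrix (Fin n) (Fin n) ℝ) := ⟨rfl⟩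

/-- The spectral radius of a real square matrix: the maximum modulus of its complex
eigenvalues (elements of the spectrum of the matrix viewed over `ℂ`). -/
noncomputable def specRad {n : ℕ} (M : Matrix (Fin n) (Fin n) ℝ) : ℝ :=
  sSup ((fun z : ℂ => ‖z‖) '' spectrum ℂ (M.map (fun x => (x : ℂ))))

/-- The ℓ²-operator norm of a real square matrix (equal to its largest singular value). -/
noncomputable def opNorm {n : ℕ} (M : Matrix (Fin n) (Fin n) ℝ) : ℝ :=
  ‖Matrix.toEuclideanCLM (𝕜 := ℝ) M‖

/-- The uniform (rotation-invariant) probability measure on the unit sphere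
`S^{n-1} ⊆ ℝⁿ`: the normalization of the spherical measure induced by Lebesgue measure. -/
noncomputable def uniSphere (n : ℕ) :
    Measure (sphere (0 : EuclideanSpace ℝ (Fin n)) 1) :=
  ((volume : Measure (EuclideanSpace ℝ (Fin n))).toSphere Set.univ)⁻¹ •
    (volume : Measure (EuclideanSpace ℝ (Fin n))).toSphere

namespace SpecRadAux

open Polynomial

lemma mem_spectrum_iff_det {n : ℕ} (B : Matrix (Fin n) (Fin n) ℂ) (z : ℂ) :
    z ∈ spectrum ℂ B ↔ (z • (1 : Matrix (Fin n) (Fin n) ℂ) - B).det = 0 := by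
  rw [spectrum.mem_iff, Algebra.algebraMap_eq_smul_one, Matrix.isUnit_iff_isUnit_det,
    isUnit_iff_ne_zero, not_ne_iff]

lemma eval_charpoly {n : ℕ} (B : Matrix (Fin n) (Fin n) ℂ) (z : ℂ) :
    (Matrix.charpoly B).eval z = (z • (1 : Matrix (Fin n) (Fin n) ℂ) - B).det := by
  rw [Matrix.charpoly, ← Polynomial.coe_evalRingHom, RingHom.map_det]
  congr 1
  ext i j
  by_cases h : i = j
  · subst h
    simp [Matrix.charmatrix_apply, Matrix.one_apply, Matrix.smul_apply]
  · simp [Matrix.charmatrix_apply, Matrix.one_apply, Matrix.smul_apply,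
      Matrix.diagonal_apply_ne _ h, h]

lemma pow_card_le_prod_real {s : Multiset ℝ} {a : ℝ} (ha : 0 ≤ a)
    (h : ∀ x ∈ s, a ≤ x) : a ^ (Multiset.card s) ≤ s.prod := by
  induction s using Multiset.induction with
  | empty => simp
  | cons x s ih =>
    simp only [Multiset.prod_cons, Multiset.card_cons, pow_succ']
    have hx : a ≤ x := h x (Multiset.mem_cons_self _ _)
    have hs : a ^ (Multiset.card s) ≤ s.prod := ih fun y hy => h y (Multiset.mem_cons_of_mem hy)
    exact mul_le_mul hx hs (pow_nonneg ha _) (le_trans ha hx)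

lemma spectrum_nonempty {n : ℕ} (hn : 0 < n) (B : Matrix (Fin n) (Fin n) ℂ) :
    (spectrum ℂ B).Nonempty := by
  have hmonic := Matrix.charpoly_monic B
  have hdeg : (Matrix.charpoly B).natDegree = n := by
    simpa using Matrix.charpoly_natDegree_eq_dim B
  have hd0 : (Matrix.charpoly B).degree ≠ 0 := by
    rw [Polynomial.degree_eq_natDegree hmonic.ne_zero, hdeg]
    exact_mod_cast hn.ne'
  obtain ⟨z, hz⟩ := IsAlgClosed.exists_root _ hd0
  exact ⟨z, (mem_spectrum_iff_det B z).mpr (by rw [← eval_charpoly]; exact hz)⟩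

lemma exists_root_close {n : ℕ} (B : Matrix (Fin n) (Fin n) ℂ) (z₀ : ℂ) (δ : ℝ) (hδ : 0 < δ)
    (h : ‖(z₀ • (1 : Matrix (Fin n) (Fin n) ℂ) - B).det‖ < δ ^ n) :
    ∃ w ∈ spectrum ℂ B, ‖z₀ - w‖ < δ := by
  set p := Matrix.charpoly B with hp
  have hmonic := Matrix.charpoly_monic B
  have hsplits : p.Splits := IsAlgClosed.splits p
  have hdeg : p.natDegree = n := by
    rw [hp, Matrix.charpoly_natDegree_eq_dim]; exact Fintype.card_fin n
  have hcard : Multiset.card p.roots = n := by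
    rw [(Polynomial.splits_iff_card_roots).mp hsplits, hdeg]
  have hprod : p.eval z₀ = (p.roots.map (fun w => z₀ - w)).prod := by
    conv_lhs => rw [hp, Polynomial.Splits.eq_prod_roots_of_monic (f := Matrix.charpoly B) hsplits hmonic]
    rw [Polynomial.eval_multiset_prod, Multiset.map_map]
    congr 1
    apply Multiset.map_congr rfl
    intro w _
    simp
  by_contra hcon
  push_neg at hcon
  have hall : ∀ x ∈ p.roots.map (fun w => ‖z₀ - w‖), δ ≤ x := by
    intro x hx
    obtain ⟨w, hw, rfl⟩ := Multiset.mem_map.mp hx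
    have hws : w ∈ spectrum ℂ B := by
      rw [mem_spectrum_iff_det, ← eval_charpoly]
      rw [hp] at hw
      exact (Polynomial.mem_roots (hmonic.ne_zero)).mp hw
    exact hcon w hws
  have hge : δ ^ n ≤ ‖p.eval z₀‖ := by
    have h2 := pow_card_le_prod_real (le_of_lt hδ) hall
    rw [Multiset.card_map, hcard] at h2
    calc δ ^ n ≤ (p.roots.map (fun w => ‖z₀ - w‖)).prod := h2
      _ = ‖(p.roots.map (fun w => z₀ - w)).prod‖ := by
          rw [show (fun w => ‖z₀ - w‖)
                = (⇑(normHom : ℂ →*₀ ℝ) ∘ fun w => z₀ - w) from rfl,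
            ← Multiset.map_map, Multiset.prod_hom]; rfl
      _ = ‖p.eval z₀‖ := by rw [hprod]
  rw [hp, eval_charpoly] at hge
  exact absurd h (not_lt.mpr hge)

lemma gersh {n : ℕ} (B : Matrix (Fin n) (Fin n) ℂ) {z : ℂ} (hz : z ∈ spectrum ℂ B) :
    ∃ i, ‖z - B i i‖ ≤ ∑ j ∈ Finset.univ.erase i, ‖B i j‖ := by
  have hz' : Module.End.HasEigenvalue (Matrix.toLin' B) z := by
    apply Module.End.hasEigenvalue_iff_mem_spectrum.mpr
    rw [← Matrix.toLin_eq_toLin']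
    exact ((AlgEquiv.spectrum_eq (Matrix.toLinAlgEquiv (Pi.basisFun ℂ (Fin n))) B).symm ▸ hz : _)
  obtain ⟨i, hi⟩ := eigenvalue_mem_ball hz'
  refine ⟨i, ?_⟩
  rw [Metric.mem_closedBall, Complex.dist_eq] at hi
  simpa using hi

end SpecRadAux

/-- Let `A = diag (d 0, …, d (n-1))` with `d 0 ≥ … ≥ d (n-1) ≥ 0`, and
let `M` have all row absolute sums at most `1`.  For `t ≥ 0` and `A_t = A (I + t M)`, the
spectral radius satisfies `d 0 (1 + 2t) ≥ ρ(A_t) ≥ d 0 (1 − 2nt)`. -/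
theorem specRad_perturbation_bounds (n : ℕ) (hn : 0 < n)
    (d : Fin n → ℝ) (hd : Antitone d) (hd0 : ∀ i, 0 ≤ d i)
    (M : Matrix (Fin n) (Fin n) ℝ) (hM : ∀ i, (∑ j, |M i j|) ≤ 1)
    (t : ℝ) (ht : 0 ≤ t) :
    specRad (Matrix.diagonal d * (1 + t • M)) ≤ d ⟨0, hn⟩ * (1 + 2 * t)
      ∧ d ⟨0, hn⟩ * (1 - 2 * n * t) ≤ specRad (Matrix.diagonal d * (1 + t • M)) := by
  classical
  have hd00 : (0:ℝ) ≤ d ⟨0, hn⟩ := hd0 _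
  have hdle : ∀ i : Fin n, d i ≤ d ⟨0, hn⟩ := fun i => hd (by simp [Fin.le_def])
  set Mc : Matrix (Fin n) (Fin n) ℂ := M.map (fun x => (x : ℂ)) with hMcdef
  set Φ : ℝ → Matrix (Fin n) (Fin n) ℂ :=
    (fun s => Matrix.diagonal (fun i => (d i : ℂ)) * (1 + (s : ℂ) • Mc)) with hΦdef
  have hentry : ∀ (s : ℝ) (i j : Fin n), Φ s i j
      = (d i : ℂ) * ((if i = j then (1:ℂ) else 0) + (s : ℂ) * (M i j : ℂ)) := by
    intro s i j
    rw [hΦdef]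
    simp [Matrix.diagonal_mul, Matrix.add_apply, Matrix.one_apply, Matrix.smul_apply,
      hMcdef, Matrix.map_apply, smul_eq_mul]
  have hmap : (Matrix.diagonal d * (1 + t • M)).map (fun x => (x : ℂ)) = Φ t := by
    ext i j
    rw [Matrix.map_apply, Matrix.mul_apply, hentry]
    push_cast
    rw [Finset.sum_eq_single i]
    · by_cases h : i = j <;>
        simp [h, Matrix.diagonal_apply, Matrix.add_apply, Matrix.one_apply, Matrix.smul_apply] <;>
        push_cast <;> ring
    · intro b _ hb
      simp [Matrix.diagonal_apply_ne' _ hb]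
    · intro hi; exact absurd (Finset.mem_univ i) hi
  have hΦ0 : Φ 0 = Matrix.diagonal (fun i => (d i : ℂ)) := by
    rw [hΦdef]; push_cast; simp
  clear hMcdef hΦdef
  clear_value Mc Φ
  have hG : ∀ s : ℝ, 0 ≤ s → ∀ z ∈ spectrum ℂ (Φ s),
      ∃ i, ‖z - (d i : ℂ)‖ ≤ s * d i := by
    intro s hs z hz
    obtain ⟨i, hi⟩ := SpecRadAux.gersh (Φ s) hz
    refine ⟨i, ?_⟩
    have hoff : ∀ j : Fin n, j ≠ i → ‖Φ s i j‖ = d i * (s * |M i j|) := by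
      intro j hj
      rw [hentry, if_neg (fun h => hj h.symm), zero_add]
      rw [norm_mul, norm_mul]
      simp [Complex.norm_real, Real.norm_eq_abs, abs_of_nonneg (hd0 i), abs_of_nonneg hs]
    have hdiag : ‖Φ s i i - (d i : ℂ)‖ = d i * (s * |M i i|) := by
      rw [hentry, if_pos rfl]
      have : (d i : ℂ) * (1 + (s:ℂ) * (M i i : ℂ)) - (d i : ℂ)
          = (d i : ℂ) * ((s:ℂ) * (M i i : ℂ)) := by ring
      rw [this, norm_mul, norm_mul]
      simp [Complex.norm_real, Real.norm_eq_abs, abs_of_nonneg (hd0 i), abs_of_nonneg hs]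
    have h1 : ‖z - (d i : ℂ)‖
        ≤ ‖z - Φ s i i‖ + ‖Φ s i i - (d i : ℂ)‖ := by
      have : z - (d i : ℂ) = (z - Φ s i i) + (Φ s i i - (d i : ℂ)) := by ring
      rw [this]; exact norm_add_le _ _
    have h2 : ∑ j ∈ Finset.univ.erase i, ‖Φ s i j‖
        = d i * s * ∑ j ∈ Finset.univ.erase i, |M i j| := by
      rw [Finset.mul_sum]
      apply Finset.sum_congr rfl
      intro j hj
      rw [hoff j (Finset.ne_of_mem_erase hj)]
      ring
    have h3 : ∑ j ∈ Finset.univ.erase i, |M i j| + |M i i| = ∑ j, |M i j| :=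
      Finset.sum_erase_add _ _ (Finset.mem_univ i)
    have h4 := hM i
    have h5 : (0:ℝ) ≤ d i := hd0 i
    calc ‖z - (d i : ℂ)‖
        ≤ ‖z - Φ s i i‖ + ‖Φ s i i - (d i : ℂ)‖ := h1
      _ ≤ (d i * s * ∑ j ∈ Finset.univ.erase i, |M i j|) + d i * (s * |M i i|) := by
          rw [← h2]; exact add_le_add hi (le_of_eq hdiag)
      _ = d i * s * (∑ j ∈ Finset.univ.erase i, |M i j| + |M i i|) := by ring
      _ = d i * s * (∑ j, |M i j|) := by rw [h3]
      _ ≤ s * d i := by nlinarith [Finset.sum_nonneg (fun j (_ : j ∈ (Finset.univ : Finset (Fin n))) => abs_nonneg (M i j)), mul_nonneg h5 hs]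
  have hub : ∀ x ∈ (fun z : ℂ => ‖z‖) '' spectrum ℂ (Φ t),
      x ≤ d ⟨0, hn⟩ * (1 + 2 * t) := by
    rintro x ⟨z, hz, rfl⟩
    obtain ⟨i, hi⟩ := hG t ht z hz
    have habs : ‖z‖ ≤ ‖z - (d i : ℂ)‖ + d i := by
      calc ‖z‖ = ‖(z - (d i:ℂ)) + (d i : ℂ)‖ := by rw [sub_add_cancel]
        _ ≤ ‖z - (d i:ℂ)‖ + ‖(d i : ℂ)‖ := norm_add_le _ _
        _ = ‖z - (d i:ℂ)‖ + d i := by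
            rw [Complex.norm_real, Real.norm_eq_abs, abs_of_nonneg (hd0 i)]
    nlinarith [hdle i, hd0 i, hi, mul_nonneg ht (sub_nonneg.mpr (hdle i))]
  have hBdd : BddAbove ((fun z : ℂ => ‖z‖) '' spectrum ℂ (Φ t)) :=
    ⟨d ⟨0, hn⟩ * (1 + 2 * t), fun x hx => hub x hx⟩
  have hNe : ((fun z : ℂ => ‖z‖) '' spectrum ℂ (Φ t)).Nonempty :=
    (SpecRadAux.spectrum_nonempty hn (Φ t)).image _
  constructor
  · rw [specRad, hmap]
    exact Real.sSup_le hub (by positivity)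
  · rw [specRad, hmap]
    by_cases hc : d ⟨0, hn⟩ * (1 - 2 * n * t) ≤ 0
    · obtain ⟨x, hx⟩ := hNe
      have hx0 : 0 ≤ x := by
        obtain ⟨z, _, rfl⟩ := hx
        exact norm_nonneg z
      exact le_trans hc (le_trans hx0 (le_csSup hBdd hx))
    push_neg at hc
    -- nontrivial case
    have hdpos : 0 < d ⟨0, hn⟩ := by
      rcases mul_pos_iff.mp hc with ⟨h1, _⟩ | ⟨h1, _⟩
      · exact h1
      · linarith
    have hfac : 0 < 1 - 2 * n * t := by
      rcases mul_pos_iff.mp hc with ⟨_, h2⟩ | ⟨h1, _⟩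
      · exact h2
      · linarith
    have hn1 : (1:ℝ) ≤ (n:ℝ) := by exact_mod_cast hn
    have ht2 : 2 * t < 1 := by nlinarith
    have ht1 : t < 1 := by linarith
    -- extended diagonal sequence
    set D : ℕ → ℝ := fun j => if h : j < n then d ⟨j, h⟩ else 0 with hDdef
    have hDanti : ∀ a b : ℕ, a ≤ b → D b ≤ D a := by
      intro a b hab
      rw [hDdef]
      dsimp only
      split_ifs with h1 h2 h2
      · exact hd (by simp [Fin.le_def, hab])
      · omega
      · exact hd0 _
      · exact le_refl 0
    have hDnn : ∀ j, 0 ≤ D j := by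
      intro j; rw [hDdef]; dsimp only; split_ifs
      · exact hd0 _
      · exact le_refl 0
    have hD0 : D 0 = d ⟨0, hn⟩ := by rw [hDdef]; simp [hn]
    have hDeq : ∀ i : Fin n, D (i : ℕ) = d i := by
      intro i; rw [hDdef]; simp [i.isLt]
    clear hDdef
    clear_value D
    -- the cut index k
    have hPex : ∃ m, (m + 1 = n) ∨ (t * (D m + D (m+1)) < D m - D (m+1)) :=
      ⟨n - 1, Or.inl (by omega)⟩
    obtain ⟨k, hk, hkmin⟩ : ∃ k, ((k + 1 = n) ∨ (t * (D k + D (k+1)) < D k - D (k+1)))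
        ∧ ∀ j, j < k → ¬ ((j + 1 = n) ∨ (t * (D j + D (j+1)) < D j - D (j+1))) :=
      ⟨Nat.find hPex, Nat.find_spec hPex, fun j hj => Nat.find_min hPex hj⟩
    clear hPex
    have hkle : k ≤ n - 1 := by
      by_contra hcon
      exact hkmin (n-1) (by omega) (Or.inl (by omega))
    have hkn : k < n := by omega
    have hchain : ∀ j, j < k → D j - D (j+1) ≤ t * (D j + D (j+1)) := by
      intro j hj
      exact le_of_not_gt (fun hlt => hkmin j hj (Or.inr hlt))
    have hDk : ∀ m, m ≤ k → D 0 - 2 * t * D 0 * (m:ℝ) ≤ D m := by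
      intro m
      induction m with
      | zero => simp
      | succ m ih =>
        intro hm
        have h1 := ih (by omega)
        have h2 := hchain m (by omega)
        have h4 := hDanti 0 m (Nat.zero_le m)
        have h5 := hDanti 0 (m+1) (Nat.zero_le (m+1))
        have h6 := hDnn m
        have h7 := hDnn (m+1)
        push_cast
        nlinarith [ht]
    -- the set W
    set F : Finset (Fin n) := Finset.univ.filter (fun i : Fin n => (i : ℕ) ≤ k) with hFdef
    set W : Set ℂ := ⋃ i ∈ F, Metric.closedBall ((d i : ℝ) : ℂ) (t * d i) with hWdef
    have hWcpt : IsCompact W := F.finite_toSet.isCompact_biUnion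
      (fun i _ => isCompact_closedBall _ _)
    have hWmem : ∀ z : ℂ, z ∈ W ↔
        ∃ i : Fin n, (i : ℕ) ≤ k ∧ ‖z - (d i : ℂ)‖ ≤ t * d i := by
      intro z
      rw [hWdef]
      simp [hFdef, Metric.mem_closedBall, Complex.dist_eq]
    clear hWdef hFdef
    clear_value W F
    have hWlow : ∀ z ∈ W, d ⟨0, hn⟩ * (1 - 2 * n * t) ≤ ‖z‖ := by
      intro z hz
      obtain ⟨i, hik, hball⟩ := (hWmem z).mp hz
      have habs : d i - ‖z - (d i:ℂ)‖ ≤ ‖z‖ := by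
        have h1 : ‖(d i : ℂ)‖ ≤ ‖z‖ + ‖(d i:ℂ) - z‖ := by
          calc ‖(d i : ℂ)‖ = ‖z + ((d i:ℂ) - z)‖ := by ring_nf
            _ ≤ _ := norm_add_le _ _
        have h2 : ‖(d i:ℂ) - z‖ = ‖z - (d i:ℂ)‖ := by
          rw [← norm_neg]; ring_nf
        rw [Complex.norm_real, Real.norm_eq_abs, abs_of_nonneg (hd0 i)] at h1
        linarith [h2 ▸ h1]
      have h3 : D k ≤ d i := by
        rw [← hDeq i]; exact hDanti (i:ℕ) k hik
      have h4 := hDk k le_rfl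
      have hkr : (k:ℝ) ≤ (n:ℝ) - 1 := by
        have : ((k:ℕ):ℝ) ≤ ((n-1 : ℕ):ℝ) := by exact_mod_cast hkle
        rwa [Nat.cast_sub hn, Nat.cast_one] at this
      have h5 : d i * (1 - t) ≤ ‖z‖ := by nlinarith [hball]
      have h6 : D k * (1 - t) ≤ d i * (1 - t) :=
        mul_le_mul_of_nonneg_right h3 (by linarith)
      have h7 : (D 0 - 2 * t * D 0 * (k:ℝ)) * (1 - t) ≤ D k * (1 - t) :=
        mul_le_mul_of_nonneg_right h4 (by linarith)
      rw [hD0] at h7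
      nlinarith [mul_nonneg ht hd00, mul_nonneg (mul_nonneg ht hd00) (Nat.cast_nonneg k : (0:ℝ) ≤ (k:ℝ))]
    -- separation constant
    set δ : ℝ := if h : k + 1 < n then D k * (1 - t) - D (k+1) * (1 + t) else 1 with hδdef
    have hδpos : 0 < δ := by
      rw [hδdef]
      split_ifs with h
      · have hgap : t * (D k + D (k+1)) < D k - D (k+1) := by
          rcases hk with h1 | h2
          · omega
          · exact h2
        linarith
      · exact one_pos
    have hsep : ∀ z w : ℂ, z ∈ W →
        (∃ i : Fin n, k < (i:ℕ) ∧ ‖w - (d i : ℂ)‖ ≤ t * d i) →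
        δ ≤ ‖z - w‖ := by
      rintro z w hz ⟨i, hik, hwi⟩
      have hkn' : k + 1 < n := by have := i.isLt; omega
      obtain ⟨i₀, hi₀k, hzi⟩ := (hWmem z).mp hz
      have h1 : d i₀ - t * d i₀ ≤ z.re := by
        have hre : |(z - (d i₀:ℂ)).re| ≤ ‖z - (d i₀:ℂ)‖ :=
          Complex.abs_re_le_norm _
        have hre2 : (z - (d i₀:ℂ)).re = z.re - d i₀ := by simp
        rw [hre2] at hre
        have := (abs_le.mp (le_trans hre hzi)).1
        linarith
      have h2 : w.re ≤ d i + t * d i := by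
        have hre : |(w - (d i:ℂ)).re| ≤ ‖w - (d i:ℂ)‖ :=
          Complex.abs_re_le_norm _
        have hre2 : (w - (d i:ℂ)).re = w.re - d i := by simp
        rw [hre2] at hre
        have := (abs_le.mp (le_trans hre hwi)).2
        linarith
      have h3 : D k ≤ d i₀ := by rw [← hDeq i₀]; exact hDanti _ _ hi₀k
      have h4 : d i ≤ D (k+1) := by rw [← hDeq i]; exact hDanti _ _ (by omega)
      have h5 : z.re - w.re ≤ ‖z - w‖ := by
        have := Complex.re_le_norm (z - w)
        simpa using this
      rw [hδdef, dif_pos hkn']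
      have h6 : D k * (1 - t) ≤ d i₀ * (1 - t) :=
        mul_le_mul_of_nonneg_right h3 (by linarith)
      have h7 : d i * (1 + t) ≤ D (k+1) * (1 + t) :=
        mul_le_mul_of_nonneg_right h4 (by linarith)
      linarith [h1, h2, h5, h6, h7]
    clear hδdef
    clear_value δ
    -- the determinant function and its continuity
    set f : ℝ × ℂ → ℂ :=
      fun q => (q.2 • (1 : Matrix (Fin n) (Fin n) ℂ) - Φ q.1).det with hfdef
    have hfcont : Continuous f := by
      rw [hfdef]
      apply Continuous.matrix_det
      apply continuous_matrix
      intro i j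
      have hq : ∀ q : ℝ × ℂ, (q.2 • (1 : Matrix (Fin n) (Fin n) ℂ) - Φ q.1) i j
          = q.2 * (if i = j then (1:ℂ) else 0)
            - (d i : ℂ) * ((if i = j then (1:ℂ) else 0) + (q.1 : ℂ) * (M i j : ℂ)) := by
        intro q
        rw [Matrix.sub_apply, Matrix.smul_apply, hentry]
        simp [Matrix.one_apply, smul_eq_mul]
      simp only [hq]
      exact ((continuous_snd.mul continuous_const).sub
        (continuous_const.mul (continuous_const.add
          ((Complex.continuous_ofReal.comp continuous_fst).mul continuous_const))))
    have hfeq : ∀ (s : ℝ) (z : ℂ),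
        f (s, z) = ((z • (1 : Matrix (Fin n) (Fin n) ℂ) - Φ s)).det := fun _ _ => rfl
    -- the set A of parameters with a root in W
    set A : Set ℝ := {s | s ∈ Set.Icc (0:ℝ) t ∧ ∃ z ∈ W, f (s, z) = 0} with hAdef
    have h0W : ((d ⟨0, hn⟩ : ℝ) : ℂ) ∈ W := by
      rw [hWmem]
      exact ⟨⟨0, hn⟩, Nat.zero_le _, by simpa using mul_nonneg ht hd00⟩
    have h0A : (0:ℝ) ∈ A := by
      refine ⟨⟨le_rfl, ht⟩, ((d ⟨0, hn⟩ : ℝ) : ℂ), h0W, ?_⟩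
      rw [hfdef]
      dsimp only
      rw [hΦ0]
      have hdiag : ((d ⟨0, hn⟩ : ℝ) : ℂ) • (1 : Matrix (Fin n) (Fin n) ℂ)
          - Matrix.diagonal (fun i => (d i : ℂ))
          = Matrix.diagonal (fun i => ((d ⟨0, hn⟩ : ℝ) : ℂ) - (d i : ℂ)) := by
        ext i j
        by_cases h : i = j
        · subst h; simp [Matrix.smul_apply, Matrix.one_apply, Matrix.diagonal_apply]
        · simp [Matrix.smul_apply, Matrix.one_apply, Matrix.diagonal_apply_ne _ h, h]
      rw [hdiag, Matrix.det_diagonal]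
      exact Finset.prod_eq_zero (Finset.mem_univ ⟨0, hn⟩) (by simp)
    have hbddA : BddAbove A := ⟨t, fun s hs => hs.1.2⟩
    have hneA : A.Nonempty := ⟨0, h0A⟩
    have hAmem : ∀ s : ℝ, s ∈ A ↔ (s ∈ Set.Icc (0:ℝ) t ∧ ∃ z ∈ W, f (s, z) = 0) :=
      fun _ => Iff.rfl
    clear hAdef hfdef h0W
    clear_value A f
    -- sSup A belongs to A, and equals t
    set σ : ℝ := sSup A with hσdef
    have hσIcc : σ ∈ Set.Icc (0:ℝ) t :=
      ⟨le_csSup hbddA h0A, csSup_le hneA (fun s hs => ((hAmem s).mp hs).1.2)⟩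
    have hσA : σ ∈ A := by
      obtain ⟨u, humono, hutend, humem⟩ := exists_seq_tendsto_sSup hneA hbddA
      choose zfn hzW hzdet using fun m => ((hAmem (u m)).mp (humem m)).2
      obtain ⟨zl, hzlW, φf, hφmono, hzl⟩ := hWcpt.tendsto_subseq hzW
      have h1 : Filter.Tendsto (fun m => (u (φf m), zfn (φf m)))
          Filter.atTop (nhds (σ, zl)) := by
        apply Filter.Tendsto.prodMk_nhds
        · exact hutend.comp hφmono.tendsto_atTop
        · exact hzl
      have h2 : Filter.Tendsto (fun m => f (u (φf m), zfn (φf m)))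
          Filter.atTop (nhds (f (σ, zl))) :=
        (hfcont.continuousAt (x := (σ, zl))).tendsto.comp h1
      have h3 : (fun m => f (u (φf m), zfn (φf m))) = fun _ => (0:ℂ) :=
        funext fun m => hzdet (φf m)
      have h4 : f (σ, zl) = 0 := by
        apply tendsto_nhds_unique h2
        rw [h3]
        exact tendsto_const_nhds
      exact (hAmem σ).mpr ⟨hσIcc, zl, hzlW, h4⟩
    have hσt : σ = t := by
      by_contra hnet
      have hσlt : σ < t := lt_of_le_of_ne hσIcc.2 hnet
      obtain ⟨hI, z₀, hz₀W, hz₀det⟩ := (hAmem σ).mp hσA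
      have hgc : Filter.Tendsto (fun s : ℝ => ‖f (s, z₀)‖) (nhds σ)
          (nhds (‖f (σ, z₀)‖)) := by
        apply Continuous.tendsto
        exact continuous_norm.comp (hfcont.comp (continuous_id.prodMk continuous_const))
      have h0 : ‖f (σ, z₀)‖ = 0 := by rw [hz₀det]; simp
      have h0' : ‖f (σ, z₀)‖ < δ ^ n := by
        rw [h0]; exact pow_pos hδpos n
      have hev : ∀ᶠ s in nhds σ, ‖f (s, z₀)‖ < δ ^ n :=
        hgc.eventually_lt_const h0'
      obtain ⟨η, hη, hball⟩ := Metric.eventually_nhds_iff.mp hev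
      set s₁ : ℝ := min t (σ + η/2) with hs₁def
      have hs₁1 : σ < s₁ := lt_min hσlt (by linarith)
      have hs₁2 : s₁ ≤ t := min_le_left _ _
      have hs₁3 : dist s₁ σ < η := by
        rw [Real.dist_eq, abs_of_pos (by linarith)]
        have : s₁ ≤ σ + η/2 := min_le_right _ _
        linarith
      have hlt : ‖f (s₁, z₀)‖ < δ ^ n := hball hs₁3
      obtain ⟨w, hwspec, hwclose⟩ := SpecRadAux.exists_root_close (Φ s₁) z₀ δ hδpos
        (by rw [hfeq] at hlt; exact hlt)
      obtain ⟨i, hi⟩ := hG s₁ (le_trans hσIcc.1 hs₁1.le) w hwspec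
      have hile : ‖w - (d i : ℂ)‖ ≤ t * d i :=
        le_trans hi (mul_le_mul_of_nonneg_right hs₁2 (hd0 i))
      by_cases hik : (i : ℕ) ≤ k
      · have hsA : s₁ ∈ A := by
          refine (hAmem s₁).mpr ⟨⟨le_trans hσIcc.1 hs₁1.le, hs₁2⟩, w, (hWmem w).mpr ⟨i, hik, hile⟩, ?_⟩
          rw [hfeq]
          exact (SpecRadAux.mem_spectrum_iff_det (Φ s₁) w).mp hwspec
        have h9 : s₁ ≤ σ := by rw [hσdef]; exact le_csSup hbddA hsA
        exact absurd h9 (not_le.mpr hs₁1)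
      · push_neg at hik
        have h9 := hsep z₀ w hz₀W ⟨i, hik, hile⟩
        exact absurd hwclose (not_lt.mpr h9)
    have htA : t ∈ A := by rw [← hσt]; exact hσA
    obtain ⟨_, z, hzW, hzdet⟩ := (hAmem t).mp htA
    have hzspec : z ∈ spectrum ℂ (Φ t) :=
      (SpecRadAux.mem_spectrum_iff_det (Φ t) z).mpr (by rw [hfeq] at hzdet; exact hzdet)
    exact le_trans (hWlow z hzW) (le_csSup hBdd ⟨z, hzspec, rfl⟩)
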